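/- Suppose m ≥ 2. If a, a' ∈ B_int differ in exactly one coordinate and b ∈ B_half, then the triangle convexHull ℝ {a, a', b} is a face of the Delone polytope of D_{2m}^* centered at u: IsExtreme ℝ (convexHull ℝ (B_int ∪ B_half)) (convexHull ℝ {a, a', b}). (Every edge of one cube of the free sum together with any vertex of the other cube spans a triangular two-dimensional face.) -/

import Mathlib

lemma aux_sum_apply {N : ℕ} {ι : Type} (T : Finset ι) (wt : ι → ℝ)
    (z : ι → EuclideanSpace ℝ (Fin N)) (i : Fin N) :
    (∑ j ∈ T, wt j • z j) i = ∑ j ∈ T, wt j * z j i := by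
  classical
  induction T using Finset.induction with
  | empty => simp
  | insert x s h ih => rw [Finset.sum_insert h, Finset.sum_insert h, ← ih]; simp [PiLp.add_apply]

lemma aux_half_mul (r s : ℝ) (hr : |r| = 1/2) (hs : |s| = 1/2) :
    r * s ≤ 1/4 ∧ (r * s = 1/4 → r = s) := by
  rw [abs_eq (by norm_num : (0:ℝ) ≤ 1/2)] at hr hs
  rcases hr with hr | hr <;> rcases hs with hs | hs <;> subst hr <;> subst hs <;> norm_num

lemma aux_combo {N : ℕ} (w u : Fin N → ℝ) {ι : Type} (T : Finset ι) (wt : ι → ℝ)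
    (z : ι → EuclideanSpace ℝ (Fin N)) (hwt : ∑ j ∈ T, wt j = 1) :
    ∑ i, w i * ((∑ j ∈ T, wt j • z j) i - u i)
      = ∑ j ∈ T, wt j * ∑ i, w i * (z j i - u i) := by
  have h1 : ∀ i : Fin N, w i * ((∑ j ∈ T, wt j • z j) i - u i)
      = ∑ j ∈ T, wt j * (w i * (z j i - u i)) := by
    intro i
    rw [aux_sum_apply]
    have hstep : (∑ j ∈ T, wt j * z j i) - u i = ∑ j ∈ T, wt j * (z j i - u i) := by
      simp only [mul_sub]
      rw [Finset.sum_sub_distrib, ← Finset.sum_mul, hwt, one_mul]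
    rw [hstep, Finset.mul_sum]
    exact Finset.sum_congr rfl fun j _ => by ring
  rw [Finset.sum_congr rfl fun i _ => h1 i, Finset.sum_comm]
  exact Finset.sum_congr rfl fun j _ => by rw [Finset.mul_sum]

lemma aux_combo2 {N : ℕ} (w u : Fin N → ℝ) (t s : ℝ) (hts : t + s = 1)
    (x y : EuclideanSpace ℝ (Fin N)) :
    ∑ i, w i * ((t • x + s • y) i - u i)
      = t * (∑ i, w i * (x i - u i)) + s * (∑ i, w i * (y i - u i)) := by
  rw [Finset.mul_sum, Finset.mul_sum, ← Finset.sum_add_distrib]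
  refine Finset.sum_congr rfl fun i _ => ?_
  have happ : (t • x + s • y) i = t * x i + s * y i := by simp [PiLp.add_apply]
  rw [happ]
  have hs' : s = 1 - t := by linarith
  subst hs'; ring

/-- If `m ≥ 2`, `a, a' ∈ B_int` differ in exactly one coordinate, and `b ∈ B_half`, then
the triangle `convexHull ℝ {a, a', b}` is a face of the Delone polytope (free sum) of
`D_{2m}^*` centered at `u`. -/
theorem stmt_8 (m : ℕ) (hm : 2 ≤ m)
    (S : Finset (Fin (2 * m))) (hS : S.card = m)
    (u : EuclideanSpace ℝ (Fin (2 * m)))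
    (huS : ∀ i ∈ S, ∃ k : ℤ, u i = (k : ℝ) + 1/2)
    (huI : ∀ i ∉ S, ∃ k : ℤ, u i = (k : ℝ))
    (Bhalf Bint : Set (EuclideanSpace ℝ (Fin (2 * m))))
    (hBhalf : Bhalf = {x : EuclideanSpace ℝ (Fin (2 * m)) |
      (∀ i ∈ S, x i = u i) ∧ (∀ i ∉ S, |x i - u i| = 1/2)})
    (hBint : Bint = {x : EuclideanSpace ℝ (Fin (2 * m)) |
      (∀ i ∉ S, x i = u i) ∧ (∀ i ∈ S, |x i - u i| = 1/2)})
    (a a' : EuclideanSpace ℝ (Fin (2 * m))) (ha : a ∈ Bint) (ha' : a' ∈ Bint)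
    (hdiff : ∃! i : Fin (2 * m), a i ≠ a' i)
    (b : EuclideanSpace ℝ (Fin (2 * m))) (hb : b ∈ Bhalf) :
    IsExtreme ℝ (convexHull ℝ (Bint ∪ Bhalf))
      (convexHull ℝ {a, a', b}) := by
  classical
  obtain ⟨i0, hi0ne, hi0uniq⟩ := hdiff
  subst hBint; subst hBhalf
  obtain ⟨haI, haS⟩ := ha
  obtain ⟨haI', haS'⟩ := ha'
  obtain ⟨hbS, hbI⟩ := hb
  have hagree : ∀ j : Fin (2*m), j ≠ i0 → a j = a' j := by
    intro j hj
    by_contra h; exact hj (hi0uniq j h)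
  have hi0S : i0 ∈ S := by
    by_contra h
    exact hi0ne (by rw [haI i0 h, haI' i0 h])
  have hmR : (2:ℝ) ≤ (m:ℝ) := by exact_mod_cast hm
  have hm0 : (0:ℝ) < (m:ℝ) := by linarith
  set lam : ℝ := ((m:ℝ) - 1) / m with hlam
  have hlampos : 0 < lam := div_pos (by linarith) hm0
  set w : Fin (2*m) → ℝ :=
    fun i => if i ∈ S then (if i = i0 then 0 else a i - u i) else lam * (b i - u i) with hw
  set g : EuclideanSpace ℝ (Fin (2*m)) → ℝ := fun x => ∑ i, w i * (x i - u i) with hg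
  set c0 : ℝ := ((m:ℝ) - 1) / 4 with hc0
  have hcard_erase : (S.erase i0).card = m - 1 := by
    rw [Finset.card_erase_of_mem hi0S, hS]
  have hcardR : ((S.erase i0).card : ℝ) = (m:ℝ) - 1 := by
    rw [hcard_erase, Nat.cast_sub (by omega), Nat.cast_one]
  have hcardc : (Sᶜ.card : ℝ) = (m:ℝ) := by
    have : Sᶜ.card = m := by
      rw [Finset.card_compl, hS, Fintype.card_fin]; omega
    rw [this]
  -- value of g on B_int points
  have hBintval : ∀ v : EuclideanSpace ℝ (Fin (2*m)), (∀ i ∉ S, v i = u i) →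
      g v = ∑ i ∈ S.erase i0, (a i - u i) * (v i - u i) := by
    intro v hvI
    have hzero : ∀ i ∈ Finset.univ, i ∉ S.erase i0 → w i * (v i - u i) = 0 := by
      intro i _ hi
      rw [Finset.mem_erase] at hi
      push_neg at hi
      by_cases hii : i = i0
      · subst hii; simp [hw, hi0S]
      · rw [hvI i (hi hii)]; ring
    calc g v = ∑ i ∈ S.erase i0, w i * (v i - u i) :=
          (Finset.sum_subset (Finset.subset_univ _) hzero).symm
      _ = ∑ i ∈ S.erase i0, (a i - u i) * (v i - u i) := by
          refine Finset.sum_congr rfl fun i hi => ?_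
          rw [Finset.mem_erase] at hi
          simp [hw, hi.1, hi.2]
  -- value of g on B_half points
  have hBhalfval : ∀ v : EuclideanSpace ℝ (Fin (2*m)), (∀ i ∈ S, v i = u i) →
      g v = ∑ i ∈ Sᶜ, lam * ((b i - u i) * (v i - u i)) := by
    intro v hvS
    have hzero : ∀ i ∈ Finset.univ, i ∉ Sᶜ → w i * (v i - u i) = 0 := by
      intro i _ hi
      rw [Finset.mem_compl, not_not] at hi
      rw [hvS i hi]; ring
    calc g v = ∑ i ∈ Sᶜ, w i * (v i - u i) :=
          (Finset.sum_subset (Finset.subset_univ _) hzero).symm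
      _ = ∑ i ∈ Sᶜ, lam * ((b i - u i) * (v i - u i)) := by
          refine Finset.sum_congr rfl fun i hi => ?_
          rw [Finset.mem_compl] at hi
          simp [hw, hi]; ring
  -- the common value on S.erase i0 for a
  have hsa : ∑ i ∈ S.erase i0, (a i - u i) * (a i - u i) = c0 := by
    have heach : ∀ i ∈ S.erase i0, (a i - u i) * (a i - u i) = 1/4 := by
      intro i hi
      have h := haS i (Finset.mem_of_mem_erase hi)
      rcases (abs_eq (by norm_num : (0:ℝ) ≤ 1/2)).1 h with h' | h' <;> rw [h'] <;> norm_num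
    rw [Finset.sum_congr rfl heach, Finset.sum_const, nsmul_eq_mul, hcardR, hc0]; ring
  have hga : g a = c0 := by rw [hBintval a haI]; exact hsa
  have hga' : g a' = c0 := by
    rw [hBintval a' haI', ← hsa]
    refine Finset.sum_congr rfl fun i hi => ?_
    rw [hagree i (Finset.ne_of_mem_erase hi)]
  have hgb : g b = c0 := by
    rw [hBhalfval b hbS]
    have heach : ∀ i ∈ Sᶜ, lam * ((b i - u i) * (b i - u i)) = lam * (1/4) := by
      intro i hi
      rw [Finset.mem_compl] at hi
      have h := hbI i hi
      rcases (abs_eq (by norm_num : (0:ℝ) ≤ 1/2)).1 h with h' | h' <;> rw [h'] <;> norm_num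
    rw [Finset.sum_congr rfl heach, Finset.sum_const, nsmul_eq_mul, hcardc, hc0, hlam]
    field_simp
  -- bound and rigidity on B_int
  have hBintle : ∀ v : EuclideanSpace ℝ (Fin (2*m)), (∀ i ∉ S, v i = u i) →
      (∀ i ∈ S, |v i - u i| = 1/2) → g v ≤ c0 ∧ (g v = c0 → v = a ∨ v = a') := by
    intro v hvI hvS
    have hval := hBintval v hvI
    have hterm : ∀ i ∈ S.erase i0, (a i - u i) * (v i - u i) ≤ 1/4 := fun i hi =>
      (aux_half_mul _ _ (haS i (Finset.mem_of_mem_erase hi))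
        (hvS i (Finset.mem_of_mem_erase hi))).1
    have hsumle : ∑ i ∈ S.erase i0, (a i - u i) * (v i - u i) ≤ c0 := by
      calc ∑ i ∈ S.erase i0, (a i - u i) * (v i - u i)
          ≤ ∑ _i ∈ S.erase i0, (1/4 : ℝ) := Finset.sum_le_sum hterm
        _ = c0 := by rw [Finset.sum_const, nsmul_eq_mul, hcardR, hc0]; ring
    refine ⟨by rw [hval]; exact hsumle, ?_⟩
    intro hEq
    rw [hval] at hEq
    have hall : ∀ i ∈ S.erase i0, (a i - u i) * (v i - u i) = 1/4 := by
      by_contra hcon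
      push_neg at hcon
      obtain ⟨i, hiT, hine⟩ := hcon
      have hlt : ∑ i ∈ S.erase i0, (a i - u i) * (v i - u i)
          < ∑ _i ∈ S.erase i0, (1/4 : ℝ) :=
        Finset.sum_lt_sum hterm ⟨i, hiT, lt_of_le_of_ne (hterm i hiT) hine⟩
      rw [hEq] at hlt
      rw [Finset.sum_const, nsmul_eq_mul, hcardR] at hlt
      rw [hc0] at hlt; linarith
    have hva : ∀ i ∈ S.erase i0, v i = a i := by
      intro i hi
      have := (aux_half_mul _ _ (haS i (Finset.mem_of_mem_erase hi))
        (hvS i (Finset.mem_of_mem_erase hi))).2 (hall i hi)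
      linarith
    by_cases hv0 : v i0 = a i0
    · left
      ext i
      by_cases hiS : i ∈ S
      · by_cases hii : i = i0
        · rw [hii]; exact hv0
        · exact hva i (Finset.mem_erase.2 ⟨hii, hiS⟩)
      · rw [hvI i hiS, haI i hiS]
    · right
      ext i
      by_cases hiS : i ∈ S
      · by_cases hii : i = i0
        · subst hii
          rcases (abs_eq (by norm_num : (0:ℝ) ≤ 1/2)).1 (hvS i hiS) with h1 | h1 <;>
          rcases (abs_eq (by norm_num : (0:ℝ) ≤ 1/2)).1 (haS i hiS) with h2 | h2 <;>
          rcases (abs_eq (by norm_num : (0:ℝ) ≤ 1/2)).1 (haS' i hiS) with h3 | h3 <;>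
          first
            | linarith
            | (exfalso; apply hv0; linarith)
            | (exfalso; apply hi0ne; linarith)
        · rw [← hagree i hii]; exact hva i (Finset.mem_erase.2 ⟨hii, hiS⟩)
      · rw [hvI i hiS, haI' i hiS]
  -- bound and rigidity on B_half
  have hBhalfle : ∀ v : EuclideanSpace ℝ (Fin (2*m)), (∀ i ∈ S, v i = u i) →
      (∀ i ∉ S, |v i - u i| = 1/2) → g v ≤ c0 ∧ (g v = c0 → v = b) := by
    intro v hvS hvI
    have hval := hBhalfval v hvS
    have hterm : ∀ i ∈ Sᶜ, lam * ((b i - u i) * (v i - u i)) ≤ lam * (1/4) := by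
      intro i hi
      rw [Finset.mem_compl] at hi
      exact mul_le_mul_of_nonneg_left
        (aux_half_mul _ _ (hbI i hi) (hvI i hi)).1 hlampos.le
    have hconstsum : ∑ _i ∈ Sᶜ, lam * (1/4 : ℝ) = c0 := by
      rw [Finset.sum_const, nsmul_eq_mul, hcardc, hc0, hlam]; field_simp
    have hsumle : ∑ i ∈ Sᶜ, lam * ((b i - u i) * (v i - u i)) ≤ c0 := by
      calc ∑ i ∈ Sᶜ, lam * ((b i - u i) * (v i - u i))
          ≤ ∑ _i ∈ Sᶜ, lam * (1/4 : ℝ) := Finset.sum_le_sum hterm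
        _ = c0 := hconstsum
    refine ⟨by rw [hval]; exact hsumle, ?_⟩
    intro hEq
    rw [hval] at hEq
    have hall : ∀ i ∈ Sᶜ, lam * ((b i - u i) * (v i - u i)) = lam * (1/4) := by
      by_contra hcon
      push_neg at hcon
      obtain ⟨i, hiT, hine⟩ := hcon
      have hlt : ∑ i ∈ Sᶜ, lam * ((b i - u i) * (v i - u i))
          < ∑ _i ∈ Sᶜ, lam * (1/4 : ℝ) :=
        Finset.sum_lt_sum hterm ⟨i, hiT, lt_of_le_of_ne (hterm i hiT) hine⟩
      rw [hEq, hconstsum] at hlt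
      exact lt_irrefl _ hlt
    ext i
    by_cases hiS : i ∈ S
    · rw [hvS i hiS, hbS i hiS]
    · have hi : i ∈ Sᶜ := Finset.mem_compl.2 hiS
      have h := hall i hi
      have h' : (b i - u i) * (v i - u i) = 1/4 := mul_left_cancel₀ (ne_of_gt hlampos) h
      have := (aux_half_mul _ _ (hbI i hiS) (hvI i hiS)).2 h'
      linarith
  -- combined generator bound
  have hgen : ∀ v ∈ ({x : EuclideanSpace ℝ (Fin (2*m)) |
        (∀ i ∉ S, x i = u i) ∧ (∀ i ∈ S, |x i - u i| = 1/2)} ∪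
      {x : EuclideanSpace ℝ (Fin (2*m)) |
        (∀ i ∈ S, x i = u i) ∧ (∀ i ∉ S, |x i - u i| = 1/2)}),
      g v ≤ c0 ∧ (g v = c0 → v ∈ ({a, a', b} : Set (EuclideanSpace ℝ (Fin (2*m))))) := by
    rintro v (⟨h1, h2⟩ | ⟨h1, h2⟩)
    · obtain ⟨hle, heq⟩ := hBintle v h1 h2
      exact ⟨hle, fun h => by rcases heq h with h | h <;> simp [h]⟩
    · obtain ⟨hle, heq⟩ := hBhalfle v h1 h2
      exact ⟨hle, fun h => by simp [heq h]⟩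
  -- g ≤ c0 on the hull
  have hPle : ∀ x ∈ convexHull ℝ
      ({x : EuclideanSpace ℝ (Fin (2*m)) |
        (∀ i ∉ S, x i = u i) ∧ (∀ i ∈ S, |x i - u i| = 1/2)} ∪
      {x : EuclideanSpace ℝ (Fin (2*m)) |
        (∀ i ∈ S, x i = u i) ∧ (∀ i ∉ S, |x i - u i| = 1/2)}), g x ≤ c0 := by
    intro x hx
    have := convexHull_min (t := {x : EuclideanSpace ℝ (Fin (2*m)) | g x ≤ c0})
      (fun v hv => (hgen v hv).1) ?_ hx
    · exact this
    · intro y hy z hz t s ht hs hts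
      simp only [Set.mem_setOf_eq] at hy hz ⊢
      have hcomb : g (t • y + s • z) = t * g y + s * g z := by
        simp only [hg]; exact aux_combo2 w u t s hts y z
      have h1 : t * g y ≤ t * c0 := mul_le_mul_of_nonneg_left hy ht
      have h2 : s * g z ≤ s * c0 := mul_le_mul_of_nonneg_left hz hs
      have h3 : t * c0 + s * c0 = c0 := by rw [← add_mul, hts, one_mul]
      linarith [hcomb]
  -- g = c0 on the triangle's hull
  have hPeq : ∀ x ∈ convexHull ℝ ({a, a', b} : Set (EuclideanSpace ℝ (Fin (2*m)))),
      g x = c0 := by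
    intro x hx
    have := convexHull_min (t := {x : EuclideanSpace ℝ (Fin (2*m)) | g x = c0})
      ?_ ?_ hx
    · exact this
    · rintro v hv
      simp only [Set.mem_insert_iff, Set.mem_singleton_iff] at hv
      rcases hv with rfl | rfl | rfl
      exacts [hga, hga', hgb]
    · intro y hy z hz t s ht hs hts
      simp only [Set.mem_setOf_eq] at hy hz ⊢
      have hcomb : g (t • y + s • z) = t * g y + s * g z := by
        simp only [hg]; exact aux_combo2 w u t s hts y z
      rw [hcomb, hy, hz, ← add_mul, hts, one_mul]
  -- points of the hull where g = c0 lie in the triangle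
  have hface : ∀ x ∈ convexHull ℝ
      ({x : EuclideanSpace ℝ (Fin (2*m)) |
        (∀ i ∉ S, x i = u i) ∧ (∀ i ∈ S, |x i - u i| = 1/2)} ∪
      {x : EuclideanSpace ℝ (Fin (2*m)) |
        (∀ i ∈ S, x i = u i) ∧ (∀ i ∉ S, |x i - u i| = 1/2)}),
      g x = c0 → x ∈ convexHull ℝ ({a, a', b} : Set (EuclideanSpace ℝ (Fin (2*m)))) := by
    intro x hx hgx
    rw [convexHull_eq] at hx
    obtain ⟨ι, T, wt, z, hw0, hw1, hzmem, hcm⟩ := hx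
    rw [Finset.centerMass_eq_of_sum_1 _ _ hw1] at hcm
    subst hcm
    have hsum : ∑ j ∈ T, wt j * g (z j) = c0 := by
      have := aux_combo w u T wt z hw1
      simp only [hg] at hgx ⊢
      rw [← hgx]
      exact this.symm
    have hkey : ∀ j ∈ T, wt j ≠ 0 →
        z j ∈ ({a, a', b} : Set (EuclideanSpace ℝ (Fin (2*m)))) := by
      intro j hj hwj
      have hle : ∀ k ∈ T, wt k * g (z k) ≤ wt k * c0 := fun k hk =>
        mul_le_mul_of_nonneg_left (hgen _ (hzmem k hk)).1 (hw0 k hk)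
      have htot : ∑ k ∈ T, wt k * c0 = c0 := by rw [← Finset.sum_mul, hw1, one_mul]
      have heach : wt j * g (z j) = wt j * c0 := by
        by_contra hne
        have hlt : ∑ k ∈ T, wt k * g (z k) < ∑ k ∈ T, wt k * c0 :=
          Finset.sum_lt_sum hle ⟨j, hj, lt_of_le_of_ne (hle j hj) hne⟩
        rw [hsum, htot] at hlt
        exact lt_irrefl _ hlt
      exact (hgen _ (hzmem j hj)).2 (mul_left_cancel₀ hwj heach)
    rw [← Finset.centerMass_eq_of_sum_1 _ _ hw1, ← Finset.centerMass_filter_ne_zero]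
    apply Finset.centerMass_mem_convexHull
    · intro i hi; exact hw0 i (Finset.mem_of_mem_filter i hi)
    · rw [Finset.sum_filter_ne_zero, hw1]; norm_num
    · intro i hi
      rw [Finset.mem_filter] at hi
      exact hkey i hi.1 hi.2
  constructor
  · apply convexHull_mono
    rintro v hv
    simp only [Set.mem_insert_iff, Set.mem_singleton_iff] at hv
    rcases hv with rfl | rfl | rfl
    · exact Or.inl ⟨haI, haS⟩
    · exact Or.inl ⟨haI', haS'⟩
    · exact Or.inr ⟨hbS, hbI⟩
  · intro x1 hx1 x2 hx2 x hx hseg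
    obtain ⟨t, s, ht, hs, hts, hsumx⟩ := hseg
    have hgx : g x = c0 := hPeq x hx
    have e : c0 = t * g x1 + s * g x2 := by
      rw [← hgx, ← hsumx]
      simp only [hg]
      exact aux_combo2 w u t s hts x1 x2
    have h1 : g x1 ≤ c0 := hPle _ hx1
    have h2 : g x2 ≤ c0 := hPle _ hx2
    have hcc : t * c0 + s * c0 = c0 := by rw [← add_mul, hts, one_mul]
    have k1 : 0 ≤ t * (c0 - g x1) := mul_nonneg ht.le (by linarith)
    have k2 : 0 ≤ s * (c0 - g x2) := mul_nonneg hs.le (by linarith)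
    have k3 : t * (c0 - g x1) + s * (c0 - g x2) = 0 := by linear_combination hcc + e
    have k4 : t * (c0 - g x1) = 0 := by linarith
    have k5 : s * (c0 - g x2) = 0 := by linarith
    have hgx1 : g x1 = c0 := by
      rcases mul_eq_zero.1 k4 with h | h
      · exact absurd h (ne_of_gt ht)
      · linarith
    have hgx2 : g x2 = c0 := by
      rcases mul_eq_zero.1 k5 with h | h
      · exact absurd h (ne_of_gt hs)
      · linarith
    exact hface x1 hx1 hgx1
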